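/- Let c > 0, γ > 0, and let u : [0,T) → ℝ be differentiable with u(0) ≥ γ/√(1+γ²) and u'(t) ≥ c·u(t)·(1 - u(t)²) whenever 0 < u(t) ≤ 1. Assume 0 < u(t) ≤ 1 for all t. Then u(t) ≥ γ·e^{ct}/√(1 + γ²·e^{2ct}) for all t ∈ [0,T). -/

import Mathlib

/-- ODE comparison lemma for u' ≥ c·u·(1-u²). -/
theorem stmt1 (c γ T : ℝ) (hc : 0 < c) (hγ : 0 < γ) (u u' : ℝ → ℝ)
    (hderiv : ∀ t ∈ Set.Ico (0 : ℝ) T, HasDerivAt u (u' t) t)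
    (hrange : ∀ t ∈ Set.Ico (0 : ℝ) T, 0 < u t ∧ u t ≤ 1)
    (hcomp : ∀ t ∈ Set.Ico (0 : ℝ) T, 0 < u t → u t ≤ 1 →
      c * u t * (1 - (u t) ^ 2) ≤ u' t)
    (hu0 : γ / Real.sqrt (1 + γ ^ 2) ≤ u 0) :
    ∀ t ∈ Set.Ico (0 : ℝ) T,
      γ * Real.exp (c * t) / Real.sqrt (1 + γ ^ 2 * Real.exp (2 * c * t)) ≤ u t := by
  set H : ℝ → ℝ := fun s => Real.exp (2 * c * s) * (((u s) ^ 2)⁻¹ - 1) with hHdef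
  have hHderiv : ∀ s ∈ Set.Ico (0 : ℝ) T, HasDerivAt H
      (2 * c * Real.exp (2 * c * s) * (((u s) ^ 2)⁻¹ - 1)
        + Real.exp (2 * c * s) * (-(2 * u s * u' s) / ((u s) ^ 2) ^ 2)) s := by
    intro s hs
    have hu := hderiv s hs
    have hupos := (hrange s hs).1
    have h1 : HasDerivAt (fun r => Real.exp (2 * c * r)) (2 * c * Real.exp (2 * c * s)) s := by
      simpa [mul_comm] using ((hasDerivAt_id s).const_mul (2 * c)).exp
    have h2 : HasDerivAt (fun r => (u r) ^ 2) (2 * u s * u' s) s := by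
      simpa [mul_comm, mul_assoc] using hu.fun_pow 2
    have h3 : HasDerivAt (fun r => ((u r) ^ 2)⁻¹) (-(2 * u s * u' s) / ((u s) ^ 2) ^ 2) s :=
      h2.inv (by positivity)
    have h4 := h3.sub_const 1
    exact h1.mul h4
  have hAnti : AntitoneOn H (Set.Ico 0 T) := by
    apply antitoneOn_of_deriv_nonpos (convex_Ico 0 T)
    · intro s hs
      exact ((hHderiv s hs).continuousAt).continuousWithinAt
    · intro s hs
      rw [interior_Ico] at hs
      exact ((hHderiv s ⟨le_of_lt hs.1, hs.2⟩).differentiableAt).differentiableWithinAt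
    · intro s hs
      rw [interior_Ico] at hs
      have hs' : s ∈ Set.Ico (0 : ℝ) T := ⟨le_of_lt hs.1, hs.2⟩
      rw [(hHderiv s hs').deriv]
      obtain ⟨hpos, hle⟩ := hrange s hs'
      have hcmp := hcomp s hs' hpos hle
      have hE : (0 : ℝ) < Real.exp (2 * c * s) := Real.exp_pos _
      set a := u s
      set b := u' s
      have ha2 : (0 : ℝ) < a ^ 2 := by positivity
      have hrw : 2 * c * Real.exp (2 * c * s) * ((a ^ 2)⁻¹ - 1)
          + Real.exp (2 * c * s) * (-(2 * a * b) / (a ^ 2) ^ 2)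
          = Real.exp (2 * c * s) * ((2 * c * a ^ 2 * (1 - a ^ 2) - 2 * a * b) / a ^ 4) := by
        field_simp
        ring
      rw [hrw]
      apply mul_nonpos_of_nonneg_of_nonpos (le_of_lt hE)
      apply div_nonpos_of_nonpos_of_nonneg _ (by positivity)
      nlinarith [hcmp, hpos]
  intro t ht
  have hT : (0 : ℝ) < T := lt_of_le_of_lt ht.1 ht.2
  have h0mem : (0 : ℝ) ∈ Set.Ico (0 : ℝ) T := ⟨le_refl _, hT⟩
  have hu0pos : 0 < u 0 := (hrange 0 h0mem).1
  -- H 0 ≤ 1/γ²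
  have hsq : (γ / Real.sqrt (1 + γ ^ 2)) ^ 2 = γ ^ 2 / (1 + γ ^ 2) := by
    rw [div_pow, Real.sq_sqrt (by positivity)]
  have hu0sq : γ ^ 2 / (1 + γ ^ 2) ≤ (u 0) ^ 2 := by
    rw [← hsq]
    apply pow_le_pow_left₀ (by positivity) hu0
  have hH0 : H 0 ≤ 1 / γ ^ 2 := by
    have : H 0 = ((u 0) ^ 2)⁻¹ - 1 := by simp [hHdef]
    rw [this]
    have h1 : ((u 0) ^ 2)⁻¹ ≤ (1 + γ ^ 2) / γ ^ 2 := by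
      rw [inv_le_iff_one_le_mul₀ (by positivity)]
      calc (1 : ℝ) = (γ ^ 2 / (1 + γ ^ 2)) * ((1 + γ ^ 2) / γ ^ 2) := by
            field_simp
        _ ≤ (u 0) ^ 2 * ((1 + γ ^ 2) / γ ^ 2) := by
            apply mul_le_mul_of_nonneg_right hu0sq (by positivity)
        _ = (1 + γ ^ 2) / γ ^ 2 * (u 0) ^ 2 := by ring
    have : (1 + γ ^ 2) / γ ^ 2 - 1 = 1 / γ ^ 2 := by field_simp; ring
    linarith
  have hHt : H t ≤ 1 / γ ^ 2 := le_trans (hAnti h0mem ht ht.1) hH0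
  -- unwind
  obtain ⟨hpos, hle⟩ := hrange t ht
  set a := u t
  set E := Real.exp (2 * c * t) with hEdef
  have hEpos : (0 : ℝ) < E := Real.exp_pos _
  have ha2 : (0 : ℝ) < a ^ 2 := by positivity
  have hHt' : E * (1 - a ^ 2) / a ^ 2 ≤ 1 / γ ^ 2 := by
    have : H t = E * (1 - a ^ 2) / a ^ 2 := by
      simp only [hHdef]
      show E * ((a ^ 2)⁻¹ - 1) = E * (1 - a ^ 2) / a ^ 2
      rw [inv_eq_one_div, div_sub_one ha2.ne', mul_div_assoc]
    linarith [this ▸ hHt]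
  have key : γ ^ 2 * E * (1 - a ^ 2) ≤ a ^ 2 := by
    rw [div_le_div_iff₀ ha2 (by positivity)] at hHt'
    nlinarith
  have hS : (0 : ℝ) < 1 + γ ^ 2 * E := by positivity
  have hsqrtS : (0 : ℝ) < Real.sqrt (1 + γ ^ 2 * E) := Real.sqrt_pos.2 hS
  rw [div_le_iff₀ hsqrtS]
  have hexp : Real.exp (c * t) ^ 2 = E := by
    rw [hEdef, sq, ← Real.exp_add]
    ring_nf
  apply le_of_pow_le_pow_left₀ (n := 2) two_ne_zero (by positivity)
  have : (a * Real.sqrt (1 + γ ^ 2 * E)) ^ 2 = a ^ 2 * (1 + γ ^ 2 * E) := by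
    rw [mul_pow, Real.sq_sqrt (le_of_lt hS)]
  rw [this, mul_pow, hexp]
  nlinarith [key]
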